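/- Let F be a finitely generated free group, let φ : F → F be an injective group endomorphism, and let H be a finite-index subgroup of F with φ(H) ⊆ H. Then Λ(φ) ⊆ Λ(φ|_H), i.e., every nonzero eigenvalue of φ is a nonzero eigenvalue of the restriction of φ to H. -/

import Mathlib

open scoped TensorProduct

/-- The complex linear endomorphism of `(G/[G,G]) ⊗_ℤ ℂ` induced by a group
endomorphism `φ : G →* G`. -/
noncomputable def inducedEnd {G : Type*} [Group G] (φ : G →* G) :
    Module.End ℂ (ℂ ⊗[ℤ] Additive (Abelianization G)) :=
  ((MonoidHom.toAdditive (Abelianization.map φ)).toIntLinearMap).baseChange ℂ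

/-- `Λ(φ)`: the set of nonzero eigenvalues of the induced map on
`(G/[G,G]) ⊗_ℤ ℂ`. -/
noncomputable def specNZ {G : Type*} [Group G] (φ : G →* G) : Set ℂ :=
  {μ : ℂ | μ ≠ 0 ∧ Module.End.HasEigenvalue (inducedEnd φ) μ}

/-- The restriction of an endomorphism `φ` to a `φ`-invariant subgroup `H`,
as an endomorphism of `H`. -/
def restrictHom {G : Type*} [Group G] (φ : G →* G) (H : Subgroup G)
    (hinv : ∀ x ∈ H, φ x ∈ H) : H →* H :=
  (φ.domRestrict H).codRestrict H fun x => hinv x x.2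

/-- Eigenvalue transfer along a surjective intertwiner: if `p ∘ f = g ∘ p` with `p`
surjective and the source finite-dimensional, then every eigenvalue of `g` is an
eigenvalue of `f`. -/
lemma hasEigenvalue_of_surjective_intertwine
    {M N : Type*} [AddCommGroup M] [Module ℂ M] [AddCommGroup N] [Module ℂ N]
    [FiniteDimensional ℂ M] (p : M →ₗ[ℂ] N) (hp : Function.Surjective p)
    (f : Module.End ℂ M) (g : Module.End ℂ N)
    (hcomm : ∀ x, p (f x) = g (p x)) {μ : ℂ}
    (hg : Module.End.HasEigenvalue g μ) : Module.End.HasEigenvalue f μ := by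
  haveI : Module.Finite ℂ N := Module.Finite.of_surjective p hp
  by_contra hf
  rw [Module.End.hasEigenvalue_iff, not_ne_iff] at hf
  set f' : M →ₗ[ℂ] M := f - μ • LinearMap.id with hf'
  set g' : N →ₗ[ℂ] N := g - μ • LinearMap.id with hg'
  have hinj : Function.Injective f' := by
    rw [← LinearMap.ker_eq_bot, eq_bot_iff]
    intro x hx
    simp only [LinearMap.mem_ker, hf', LinearMap.sub_apply, LinearMap.smul_apply,
      LinearMap.id_apply, sub_eq_zero] at hx
    have : x ∈ Module.End.eigenspace f μ := Module.End.mem_eigenspace_iff.mpr hx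
    rw [hf] at this
    exact this
  have hsurj : Function.Surjective f' := LinearMap.injective_iff_surjective.mp hinj
  have hpsub : ∀ x, p (f' x) = g' (p x) := by
    intro x
    simp only [hf', hg', LinearMap.sub_apply, LinearMap.smul_apply, LinearMap.id_apply,
      map_sub, map_smul, hcomm]
  have hgsurj : Function.Surjective g' := by
    intro y
    obtain ⟨m, rfl⟩ := hp y
    obtain ⟨x, hx⟩ := hsurj m
    exact ⟨p x, by rw [← hpsub, hx]⟩
  have hginj : Function.Injective g' := LinearMap.injective_iff_surjective.mpr hgsurj
  obtain ⟨v, hv⟩ := hg.exists_hasEigenvector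
  have hv0 : g' v = 0 := by
    simp only [hg', LinearMap.sub_apply, LinearMap.smul_apply, LinearMap.id_apply,
      sub_eq_zero]
    exact hv.apply_eq_smul
  exact hv.2 (hginj (by rw [hv0, map_zero]))

theorem eigenvalues_subset_of_finiteIndex_invariant_of_injective
    {F : Type*} [Group F] [IsFreeGroup F] [Group.FG F]
    (φ : F →* F) (H : Subgroup F) [H.FiniteIndex]
    (hinv : ∀ x ∈ H, φ x ∈ H) :
    specNZ φ ⊆ specNZ (restrictHom φ H hinv) := by
  -- the comparison map from the base change of `H^{ab}` to that of `F^{ab}`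
  set p : (ℂ ⊗[ℤ] Additive (Abelianization ↥H)) →ₗ[ℂ] (ℂ ⊗[ℤ] Additive (Abelianization F)) :=
    ((MonoidHom.toAdditive (Abelianization.map H.subtype)).toIntLinearMap).baseChange ℂ with hpdef
  -- finite dimensionality of the source
  haveI : Group.FG ↥H := Subgroup.fg_of_index_ne_zero H
  haveI : Group.FG (Abelianization ↥H) := Group.fg_of_surjective
    (f := (Abelianization.of : ↥H →* Abelianization ↥H))
    (fun y => Quotient.exists_rep y)
  haveI : AddGroup.FG (Additive (Abelianization ↥H)) := inferInstance
  haveI : Module.Finite ℤ (Additive (Abelianization ↥H)) :=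
    Module.Finite.iff_addGroup_fg.mpr inferInstance
  haveI : FiniteDimensional ℂ (ℂ ⊗[ℤ] Additive (Abelianization ↥H)) :=
    Module.Finite.base_change ℤ ℂ (Additive (Abelianization ↥H))
  -- the intertwining relation
  have hkey : (Abelianization.map H.subtype).comp (Abelianization.map (restrictHom φ H hinv))
      = (Abelianization.map φ).comp (Abelianization.map H.subtype) := by
    rw [Abelianization.map_comp, Abelianization.map_comp]
    congr 1
  have hcomm : ∀ x, p ((inducedEnd (restrictHom φ H hinv)) x) = (inducedEnd φ) (p x) := by
    intro t
    induction t using TensorProduct.induction_on with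
    | zero => simp
    | tmul c x =>
        simp only [hpdef, inducedEnd, LinearMap.baseChange_tmul]
        congr 1
        exact congrArg Additive.ofMul (DFunLike.congr_fun hkey x.toMul)
    | add a b ha hb => simp [map_add, ha, hb]
  -- surjectivity of `p`
  have hp : Function.Surjective p := by
    intro t
    induction t using TensorProduct.induction_on with
    | zero => exact ⟨0, map_zero _⟩
    | tmul c x =>
        obtain ⟨f, hf⟩ := Quotient.exists_rep x.toMul
        obtain ⟨n, hn0, -, hnH⟩ := Subgroup.exists_pow_mem_of_index_ne_zero
          (Subgroup.FiniteIndex.index_ne_zero (H := H)) f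
        have hfof : (Abelianization.of f : Abelianization F) = x.toMul := hf
        refine ⟨((n : ℂ)⁻¹ * c) ⊗ₜ Additive.ofMul (Abelianization.of (⟨f ^ n, hnH⟩ : ↥H)), ?_⟩
        have hmap : (MonoidHom.toAdditive (Abelianization.map H.subtype))
            (Additive.ofMul (Abelianization.of (⟨f ^ n, hnH⟩ : ↥H)))
            = (n : ℤ) • x := by
          have : Abelianization.map H.subtype (Abelianization.of (⟨f ^ n, hnH⟩ : ↥H))
              = (Abelianization.of f) ^ n := by
            rw [Abelianization.map_of]
            simp [Subgroup.coe_pow]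
          show Additive.ofMul (Abelianization.map H.subtype
            (Abelianization.of (⟨f ^ n, hnH⟩ : ↥H))) = (n : ℤ) • x
          rw [this, hfof]
          rw [ofMul_pow]
          simp
        simp only [hpdef, LinearMap.baseChange_tmul, AddMonoidHom.coe_toIntLinearMap, hmap]
        rw [TensorProduct.tmul_smul]
        rw [Int.cast_smul_eq_zsmul ℂ ((n : ℤ)) (((n : ℂ)⁻¹ * c) ⊗ₜ x) |>.symm]
        rw [TensorProduct.smul_tmul']
        congr 1
        have hn : (n : ℂ) ≠ 0 := Nat.cast_ne_zero.mpr hn0.ne'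
        push_cast
        field_simp
        rw [smul_eq_mul]
        field_simp
    | add a b ha hb =>
        obtain ⟨a', ha'⟩ := ha
        obtain ⟨b', hb'⟩ := hb
        exact ⟨a' + b', by rw [map_add, ha', hb']⟩
  rintro μ ⟨hμ0, hμ⟩
  exact ⟨hμ0, hasEigenvalue_of_surjective_intertwine p hp _ _ hcomm hμ⟩
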